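/- Suppose rank(N_i) = rank(M_i) for all i ∈ {0,...,n-1} (same BCJR and product-trellis notation). If additionally the rows of G are linearly independent and all spans are nonempty with a_l ≠ b_l, then the starting points a_1,...,a_k are pairwise distinct and the endpoints b_1,...,b_k are pairwise distinct. -/

import Mathlib

lemma zmod_val_sub_of_lt {n : ℕ} [NeZero n] {j a : ZMod n} (h : j.val < a.val) :
    (j - a).val = j.val + n - a.val := by
  have ha : a ≠ 0 := by
    intro h0; rw [h0, ZMod.val_zero] at h; omega
  have : NeZero a := ⟨ha⟩
  have han : a.val < n := ZMod.val_lt a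
  rw [sub_eq_add_neg, ZMod.val_add, ZMod.val_neg_of_ne_zero]
  have h1 : j.val + (n - a.val) = j.val + n - a.val := by omega
  rw [h1, Nat.mod_eq_of_lt (by omega)]

lemma circ_sum {F : Type*} [Field F] {n : ℕ} [NeZero n] (f : ZMod n → F)
    (h0 : ∑ j, f j = 0) (a i : ZMod n) :
    (∑ j ∈ Finset.univ.filter (fun j : ZMod n => a.val ≤ j.val), f j)
      + ∑ j ∈ Finset.univ.filter (fun j : ZMod n => j.val < i.val), f j
    = ∑ j ∈ Finset.univ.filter (fun j : ZMod n => (j - a).val < (i - a).val), f j := by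
  classical
  rw [← Finset.sum_union_inter]
  have hin : i.val < n := ZMod.val_lt i
  have han : a.val < n := ZMod.val_lt a
  by_cases hai : a.val ≤ i.val
  · have hAB : (Finset.univ.filter (fun j : ZMod n => a.val ≤ j.val)) ∪
        (Finset.univ.filter (fun j : ZMod n => j.val < i.val)) = Finset.univ := by
      ext j
      simp only [Finset.mem_union, Finset.mem_filter, Finset.mem_univ, true_and, iff_true]
      omega
    have hC : (Finset.univ.filter (fun j : ZMod n => a.val ≤ j.val)) ∩
        (Finset.univ.filter (fun j : ZMod n => j.val < i.val)) =
        Finset.univ.filter (fun j : ZMod n => (j - a).val < (i - a).val) := by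
      ext j
      simp only [Finset.mem_inter, Finset.mem_filter, Finset.mem_univ, true_and]
      by_cases hja : a.val ≤ j.val
      · rw [ZMod.val_sub hja, ZMod.val_sub hai]
        have := ZMod.val_lt j
        omega
      · push_neg at hja
        rw [zmod_val_sub_of_lt hja, ZMod.val_sub hai]
        omega
    rw [hAB, hC, h0, zero_add]
  · push_neg at hai
    have hAB : (Finset.univ.filter (fun j : ZMod n => a.val ≤ j.val)) ∪
        (Finset.univ.filter (fun j : ZMod n => j.val < i.val)) =
        Finset.univ.filter (fun j : ZMod n => (j - a).val < (i - a).val) := by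
      ext j
      simp only [Finset.mem_union, Finset.mem_filter, Finset.mem_univ, true_and]
      have hjn := ZMod.val_lt j
      by_cases hja : a.val ≤ j.val
      · rw [ZMod.val_sub hja, zmod_val_sub_of_lt hai]
        omega
      · push_neg at hja
        rw [zmod_val_sub_of_lt hja, zmod_val_sub_of_lt hai]
        omega
    have hI : (Finset.univ.filter (fun j : ZMod n => a.val ≤ j.val)) ∩
        (Finset.univ.filter (fun j : ZMod n => j.val < i.val)) = ∅ := by
      ext j
      simp only [Finset.mem_inter, Finset.mem_filter, Finset.mem_univ, true_and,
        Finset.notMem_empty, iff_false]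
      omega
    rw [hAB, hI, Finset.sum_empty, add_zero]

lemma sum_range_val {M : Type*} [AddCommMonoid M] {n : ℕ} [NeZero n] (f : ZMod n → M)
    (i : ZMod n) :
    ∑ s ∈ Finset.range i.val, f (s : ZMod n)
      = ∑ j ∈ Finset.univ.filter (fun j : ZMod n => j.val < i.val), f j := by
  have himg : Finset.univ.filter (fun j : ZMod n => j.val < i.val)
      = (Finset.range i.val).image (fun s : ℕ => (s : ZMod n)) := by
    ext j
    simp only [Finset.mem_filter, Finset.mem_univ, true_and, Finset.mem_image,
      Finset.mem_range]
    constructor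
    · intro hj; exact ⟨j.val, hj, ZMod.natCast_zmod_val j⟩
    · rintro ⟨s, hs, rfl⟩
      rwa [ZMod.val_cast_of_lt (hs.trans (ZMod.val_lt i))]
  rw [himg, Finset.sum_image]
  intro s hs t ht hst
  rw [Finset.mem_coe, Finset.mem_range] at hs ht
  have hs' : s < n := hs.trans (ZMod.val_lt i)
  have ht' : t < n := ht.trans (ZMod.val_lt i)
  have := congrArg ZMod.val hst
  rwa [ZMod.val_cast_of_lt hs', ZMod.val_cast_of_lt ht'] at this



/-- Membership in the half-open circular interval `(a, b]` on `ZMod n`, with `(a,a] = ∅`. -/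
def circMem (n : ℕ) [NeZero n] (a b j : ZMod n) : Prop :=
  j ≠ a ∧ (j - a).val ≤ (b - a).val

instance (n : ℕ) [NeZero n] (a b j : ZMod n) : Decidable (circMem n a b j) :=
  inferInstanceAs (Decidable (_ ∧ _))

/-- `(a, b]` is a span of `g`. -/
def IsSpan {F : Type*} [Field F] {n : ℕ} [NeZero n] (g : ZMod n → F) (a b : ZMod n) : Prop :=
  g a ≠ 0 ∧ g b ≠ 0 ∧ ∀ j : ZMod n, ¬ (j = a ∨ circMem n a b j) → g j = 0

/-- If `rank N_i = rank M_i` for all `i` and the rows of `G` are linearly independent with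
nonempty spans (`a_l ≠ b_l`), then the starting points are pairwise distinct and the
endpoints are pairwise distinct. -/
theorem distinct_span_points_of_rank_eq {F : Type*} [Field F] {n k m : ℕ} [NeZero n]
    (G : Matrix (Fin k) (ZMod n) F) (H : Matrix (Fin m) (ZMod n) F)
    (hGH : G * H.transpose = 0) (hHrank : H.rank = m)
    (a b : Fin k → ZMod n)
    (hspan : ∀ l, IsSpan (G l) (a l) (b l))
    (hne : ∀ l, a l ≠ b l)
    (hli : LinearIndependent F (fun l : Fin k => G l))
    (N : ℕ → Matrix (Fin k) (Fin m) F)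
    (hN0 : ∀ (l : Fin k) (t : Fin m),
      N 0 l t = ∑ j ∈ Finset.univ.filter (fun j : ZMod n => (a l).val ≤ j.val), G l j * H t j)
    (hNs : ∀ i : ℕ, N (i + 1) =
      N i + Matrix.of fun l t => G l ((i : ℕ) : ZMod n) * H t ((i : ℕ) : ZMod n))
    (M : ℕ → Matrix (Fin k) (Fin k) F)
    (hM : ∀ i : ℕ, M i = Matrix.diagonal fun l =>
      if circMem n (a l) (b l) ((i : ℕ) : ZMod n) then (1 : F) else 0)
    (hrank : ∀ i : ℕ, i < n → (N i).rank = (M i).rank) :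
    Function.Injective a ∧ Function.Injective b := by
  classical
  -- full row sums vanish
  have hfull : ∀ (l : Fin k) (t : Fin m), ∑ j, G l j * H t j = 0 := by
    intro l t
    have h := congrFun (congrFun hGH l) t
    rw [Matrix.mul_apply, Matrix.zero_apply] at h
    simpa [Matrix.transpose_apply] using h
  -- accumulation formula
  have hNacc : ∀ (i : ℕ) (l : Fin k) (t : Fin m),
      N i l t = N 0 l t + ∑ s ∈ Finset.range i, G l (s : ZMod n) * H t (s : ZMod n) := by
    intro i
    induction i with
    | zero => intro l t; simp
    | succ i ih =>
      intro l t
      rw [hNs i]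
      simp only [Matrix.add_apply, Matrix.of_apply, ih l t, Finset.sum_range_succ]
      ring
  -- row formula
  have hrow : ∀ (i0 : ZMod n) (l : Fin k) (t : Fin m),
      N i0.val l t = ∑ j ∈ Finset.univ.filter
        (fun j : ZMod n => (j - a l).val < (i0 - a l).val), G l j * H t j := by
    intro i0 l t
    rw [hNacc, hN0, sum_range_val (fun j : ZMod n => G l j * H t j) i0]
    exact circ_sum _ (hfull l t) (a l) i0
  -- support
  have hsupp : ∀ (l : Fin k) (j : ZMod n), (b l - a l).val < (j - a l).val → G l j = 0 := by
    intro l j hj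
    apply (hspan l).2.2
    rintro (rfl | hm)
    · simp at hj
    · exact absurd hm.2 (not_le.mpr hj)
  -- inactive rows vanish
  have hzero : ∀ (i0 : ZMod n) (l : Fin k), ¬ circMem n (a l) (b l) i0 →
      ∀ t, N i0.val l t = 0 := by
    intro i0 l hcm t
    rw [hrow]
    by_cases hia : i0 = a l
    · apply Finset.sum_eq_zero
      intro j hj
      rw [Finset.mem_filter, hia] at hj
      simp at hj
    · have hgt : (b l - a l).val < (i0 - a l).val := by
        rw [circMem, not_and_or] at hcm
        rcases hcm with h1 | h1
        · exact absurd hia (by simpa using h1)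
        · exact not_le.mp h1
      rw [Finset.sum_subset (Finset.subset_univ _) (fun j _ hj => ?_), hfull]
      rw [Finset.mem_filter, not_and_or] at hj
      have hj' : (i0 - a l).val ≤ (j - a l).val := by
        rcases hj with h | h
        · exact absurd (Finset.mem_univ j) h
        · exact not_lt.mp h
      rw [hsupp l j (lt_of_lt_of_le hgt hj'), zero_mul]
  -- the key rank contradiction
  have key : ∀ (i0 : ZMod n) (l l' : Fin k) (v : Fin m → F) (c c' : F),
      l ≠ l' → circMem n (a l) (b l) i0 → circMem n (a l') (b l') i0 →
      c ≠ 0 → (∀ t, N i0.val l t = c * v t) → (∀ t, N i0.val l' t = c' * v t) → False := by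
    intro i0 l l' v c c' hll hact hact' hc hrl hrl'
    set Act : Finset (Fin k) :=
      Finset.univ.filter (fun l'' => circMem n (a l'') (b l'') i0) with hActDef
    have hi : i0.val < n := ZMod.val_lt i0
    have hc0 : ((i0.val : ℕ) : ZMod n) = i0 := ZMod.natCast_zmod_val i0
    have hMi : (M i0.val).rank = Act.card := by
      rw [hM, Matrix.rank_diagonal]
      rw [Fintype.card_subtype]
      congr 1
      ext l''
      simp [hc0, Finset.mem_filter, hActDef]
    have hNi : (N i0.val).rank = Act.card := by rw [hrank _ hi, hMi]
    have hlA : l ∈ Act := by simp [hActDef, hact]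
    have hl'A : l' ∈ Act := by simp [hActDef, hact']
    set s : Finset (Fin m → F) := (Act.erase l').image (N i0.val) with hsDef
    have hsub : ∀ l'' : Fin k, N i0.val l'' ∈ Submodule.span F (s : Set (Fin m → F)) := by
      intro l''
      by_cases h1 : circMem n (a l'') (b l'') i0
      · by_cases h2 : l'' = l'
        · subst h2
          have hrow_l : N i0.val l'' = (c' * c⁻¹) • N i0.val l := by
            funext t
            rw [Pi.smul_apply, hrl t, hrl' t, smul_eq_mul]
            field_simp
          rw [hrow_l]
          refine Submodule.smul_mem _ _ (Submodule.subset_span ?_)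
          simp only [hsDef, Finset.coe_image, Set.mem_image, Finset.mem_coe,
            Finset.mem_erase, Finset.mem_image]
          exact Finset.mem_image_of_mem (N i0.val) (Finset.mem_erase.mpr ⟨hll, hlA⟩)
        · refine Submodule.subset_span ?_
          simp only [hsDef, Finset.coe_image, Set.mem_image, Finset.mem_coe,
            Finset.mem_erase, Finset.mem_image]
          exact Finset.mem_image_of_mem (N i0.val) (Finset.mem_erase.mpr ⟨h2, by simp [hActDef, h1]⟩)
      · have hz : N i0.val l'' = 0 := funext (hzero i0 l'' h1)
        rw [hz]; exact Submodule.zero_mem _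
    have hle : (N i0.val).rank ≤ (Act.erase l').card := by
      rw [Matrix.rank_eq_finrank_span_row]
      have h1 : Submodule.span F (Set.range (N i0.val)) ≤
          Submodule.span F (s : Set (Fin m → F)) := by
        rw [Submodule.span_le]
        rintro _ ⟨l'', rfl⟩
        exact hsub l''
      calc Module.finrank F (Submodule.span F (Set.range (N i0.val)))
          ≤ Module.finrank F (Submodule.span F (s : Set (Fin m → F))) :=
            Submodule.finrank_mono h1
        _ ≤ s.card := finrank_span_finset_le_card s
        _ ≤ (Act.erase l').card := Finset.card_image_le
    have hcard : (Act.erase l').card < Act.card :=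
      Finset.card_erase_lt_of_mem hl'A
    omega
  constructor
  · -- starting points distinct
    intro l l' hall'
    by_contra hll
    have h10 : (1 : ZMod n) ≠ 0 := by
      intro h10
      apply hne l
      have hz : b l - a l = 0 := by
        calc b l - a l = (b l - a l) * 1 := (mul_one _).symm
          _ = 0 := by rw [h10, mul_zero]
      exact (sub_eq_zero.mp hz).symm
    have hn2 : 1 < n := by
      rcases Nat.lt_or_ge n 2 with h | h
      · interval_cases n
        · exact absurd rfl (NeZero.ne 0)
        · exact absurd (Subsingleton.elim _ _) h10
      · omega
    have hv1 : (1 : ZMod n).val = 1 := ZMod.val_one_eq_one_mod n ▸ Nat.mod_eq_of_lt hn2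
    have hone_le : ∀ l'' : Fin k, 1 ≤ (b l'' - a l'').val := by
      intro l''
      refine Nat.one_le_iff_ne_zero.mpr fun h0 => hne l'' ?_
      have : b l'' - a l'' = 0 := by rwa [← ZMod.val_eq_zero]
      exact (sub_eq_zero.mp this).symm
    set i0 : ZMod n := a l + 1 with hi0
    have hsub1 : i0 - a l = 1 := by rw [hi0]; ring
    have hsub1' : i0 - a l' = 1 := by rw [hi0, hall']; ring
    have hact : circMem n (a l) (b l) i0 := by
      refine ⟨fun h => h10 ?_, by rw [hsub1, hv1]; exact hone_le l⟩
      rw [← hsub1, h, sub_self]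
    have hact' : circMem n (a l') (b l') i0 := by
      refine ⟨fun h => h10 ?_, by rw [hsub1', hv1]; exact hone_le l'⟩
      rw [← hsub1', h, sub_self]
    have hfilt : ∀ l'' : Fin k, i0 - a l'' = 1 →
        Finset.univ.filter (fun j : ZMod n => (j - a l'').val < (i0 - a l'').val)
          = {a l''} := by
      intro l'' h1
      ext j
      simp only [Finset.mem_filter, Finset.mem_univ, true_and, Finset.mem_singleton, h1, hv1]
      rw [Nat.lt_one_iff, ZMod.val_eq_zero, sub_eq_zero]
    have hrl : ∀ t, N i0.val l t = G l (a l) * H t (a l) := by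
      intro t
      rw [hrow, hfilt l hsub1, Finset.sum_singleton]
    have hrl' : ∀ t, N i0.val l' t = G l' (a l) * H t (a l) := by
      intro t
      rw [hrow, hfilt l' hsub1', Finset.sum_singleton, ← hall']
    exact key i0 l l' (fun t => H t (a l)) (G l (a l)) (G l' (a l)) hll hact hact'
      (hspan l).1 hrl hrl'
  · -- end points distinct
    intro l l' hbll'
    by_contra hll
    have hrowb : ∀ l'' : Fin k, ∀ t,
        N (b l'').val l'' t = (-(G l'' (b l''))) * H t (b l'') := by
      intro l'' t
      rw [hrow]
      have hsplit := Finset.sum_filter_add_sum_filter_not Finset.univ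
        (fun j : ZMod n => (j - a l'').val < (b l'' - a l'').val)
        (fun j : ZMod n => G l'' j * H t j)
      have hrest : ∑ j ∈ Finset.univ.filter
          (fun j : ZMod n => ¬ ((j - a l'').val < (b l'' - a l'').val)),
          G l'' j * H t j = G l'' (b l'') * H t (b l'') := by
        apply Finset.sum_eq_single_of_mem
        · simp
        · intro j hj hjb
          rw [Finset.mem_filter] at hj
          have h1 : (b l'' - a l'').val ≤ (j - a l'').val := not_lt.mp hj.2
          rcases lt_or_eq_of_le h1 with h2 | h2
          · rw [hsupp l'' j h2, zero_mul]
          · exfalso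
            apply hjb
            have hjeq : j - a l'' = b l'' - a l'' := by
              rw [← ZMod.natCast_zmod_val (j - a l''), ← h2, ZMod.natCast_zmod_val]
            exact sub_left_inj.mp hjeq
      have h0 := hfull l'' t
      rw [← hsplit, hrest] at h0
      linear_combination h0
    have hact : circMem n (a l) (b l) (b l) := ⟨(hne l).symm, le_refl _⟩
    have hact' : circMem n (a l') (b l') (b l) := by
      rw [hbll']
      exact ⟨(hne l').symm, le_refl _⟩
    have hrl' : ∀ t, N (b l).val l' t = (-(G l' (b l'))) * H t (b l) := by
      intro t
      rw [hbll']
      exact hrowb l' t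
    exact key (b l) l l' (fun t => H t (b l)) (-(G l (b l))) (-(G l' (b l'))) hll hact hact'
      (neg_ne_zero.mpr (hspan l).2.1) (hrowb l) hrl'
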